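/- Let G be a locally finite connected graph having the finite-step retaining property of degree d. Then either G has the containment property of degree d, or G has at least two ends; more precisely, in the latter case there is a finite set W of vertices such that G \ W has at least two unbounded connected components. -/

import Mathlib

/-- The growth comparison relation: `f ≼ g` iff there is `C > 0` with
`f n ≤ C * g (C*n + C) + C` for all `n`. -/
def GrowthLE (f g : ℕ → ℕ) : Prop :=
  ∃ C : ℕ, 0 < C ∧ ∀ n, f n ≤ C * g (C * n + C) + C

/-- Equivalence of growth rates. -/
def GrowthEquiv (f g : ℕ → ℕ) : Prop := GrowthLE f g ∧ GrowthLE g f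

/-- The growth function of a subset `U` of a metric space, with basepoint set `A`:
`n ↦ #(U ∩ B(A, n))`. -/
noncomputable def relGrowth {X : Type*} [MetricSpace X] (U A : Set X) : ℕ → ℕ :=
  fun n => Set.ncard {x | x ∈ U ∧ ∃ a ∈ A, dist a x ≤ (n : ℝ)}

/-- A metric space is discrete and proper iff all balls (of integer radius) are finite. -/
def DiscreteProper (X : Type*) [MetricSpace X] : Prop :=
  ∀ (x : X) (n : ℕ), {y : X | dist x y ≤ (n : ℝ)}.Finite

/-- Uniformly proper: there is a uniform bound on cardinalities of all balls of radius `n`. -/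
def UniformlyProper (X : Type*) [MetricSpace X] : Prop :=
  ∃ g : ℕ → ℕ, ∀ (x : X) (n : ℕ),
    {y : X | dist x y ≤ (n : ℝ)}.Finite ∧ Set.ncard {y : X | dist x y ≤ (n : ℝ)} ≤ g n

/-- A `c`-quasi-isometry between metric spaces. -/
def IsQuasiIsometryMS {X Y : Type*} [MetricSpace X] [MetricSpace Y] (c : ℝ) (φ : X → Y) : Prop :=
  1 ≤ c ∧
  (∀ a b : X, dist a b / c - c ≤ dist (φ a) (φ b) ∧ dist (φ a) (φ b) ≤ c * dist a b + c) ∧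
  (∀ y : Y, ∃ x : X, dist (φ x) y ≤ c)

/-- Growth function of `U ⊆ V(G)` (with the metric induced by the path-metric of `G`)
with respect to basepoint set `A`. -/
noncomputable def graphGrowth {V : Type*} (G : SimpleGraph V) (U A : Set V) : ℕ → ℕ :=
  fun n => Set.ncard {v | v ∈ U ∧ ∃ a ∈ A, G.dist a v ≤ n}

/-- `Growth(U) = Growth(G)` for `U` a set of vertices of `G` with the induced metric. -/
def GrowthEqFull {V : Type*} (G : SimpleGraph V) (U : Set V) : Prop :=
  ∃ u₀ ∈ U, GrowthEquiv (graphGrowth G Set.univ {u₀}) (graphGrowth G U {u₀})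

/-- The set of vertices protected up to (and including) time `n`. -/
def protectedUpTo {V : Type*} (W : ℕ → Set V) (n : ℕ) : Set V :=
  ⋃ i ∈ Finset.Icc 1 n, W i

/-- The set of vertices on fire at time `n`, for fire reach `r`, strategy `W` and
initial fire `X0`: `X (n+1)` consists of vertices joined to `X n` by a path of length
at most `r` avoiding `(W 1 ∪ ⋯ ∪ W (n+1)) \ X n`. -/
def fireSet {V : Type*} (G : SimpleGraph V) (r : ℕ) (W : ℕ → Set V) (X0 : Set V) : ℕ → Set V
  | 0 => X0
  | n + 1 =>
    {v | ∃ u ∈ fireSet G r W X0 n, ∃ p : G.Walk u v, p.length ≤ r ∧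
      ∀ x ∈ p.support, x ∉ protectedUpTo W (n + 1) \ fireSet G r W X0 n}

/-- The set of vertices on fire at the end of the game. -/
def burnedSet {V : Type*} (G : SimpleGraph V) (r : ℕ) (W : ℕ → Set V) (X0 : Set V) : Set V :=
  ⋃ n, fireSet G r W X0 n

/-- An `{f n}`-strategy: at each time `n ≥ 1` at most `f n` vertices are protected. -/
def IsStrategyBound {V : Type*} (f : ℕ → ℕ) (W : ℕ → Set V) : Prop :=
  ∀ n, 1 ≤ n → (W n).Finite ∧ (W n).ncard ≤ f n

/-- A finite-step strategy protects no vertices after some finite time. -/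
def FiniteStepStrategy {V : Type*} (W : ℕ → Set V) : Prop :=
  ∃ N, ∀ n, N ≤ n → W n = ∅

/-- A retaining `({f n}, r)`-strategy for the initial fire `X0`. -/
def IsRetainingStrategy {V : Type*} (G : SimpleGraph V) (f : ℕ → ℕ) (r : ℕ)
    (X0 : Set V) (W : ℕ → Set V) : Prop :=
  IsStrategyBound f W ∧ GrowthEqFull G (burnedSet G r W X0)ᶜ

/-- The `({f n}, r)`-retaining property. -/
def RetainingProperty {V : Type*} (G : SimpleGraph V) (f : ℕ → ℕ) (r : ℕ) : Prop :=
  ∀ X0 : Set V, X0.Finite → ∃ W, IsRetainingStrategy G f r X0 W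

/-- Polynomial retaining property of degree `d` (fire reach one). -/
def PolyRetaining {V : Type*} (G : SimpleGraph V) (d : ℕ) : Prop :=
  ∃ K : ℕ, 0 < K ∧ RetainingProperty G (fun n => K * n ^ d) 1

/-- The finite-step `{f n}`-retaining property (fire reach one). -/
def FiniteStepRetainingProperty {V : Type*} (G : SimpleGraph V) (f : ℕ → ℕ) : Prop :=
  ∀ X0 : Set V, X0.Finite → ∃ W, IsRetainingStrategy G f 1 X0 W ∧ FiniteStepStrategy W

/-- The finite-step polynomial retaining property of degree `d`. -/
def FiniteStepPolyRetaining {V : Type*} (G : SimpleGraph V) (d : ℕ) : Prop :=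
  ∃ K : ℕ, 0 < K ∧ FiniteStepRetainingProperty G (fun n => K * n ^ d)

/-- The `({f n}, r)`-containment property. -/
def ContainmentProperty {V : Type*} (G : SimpleGraph V) (f : ℕ → ℕ) (r : ℕ) : Prop :=
  ∀ X0 : Set V, X0.Finite →
    ∃ W, IsStrategyBound f W ∧ (burnedSet G r W X0).Finite

/-- Polynomial containment property of degree `d` (fire reach one). -/
def PolyContainment {V : Type*} (G : SimpleGraph V) (d : ℕ) : Prop :=
  ∃ K : ℕ, 0 < K ∧ ContainmentProperty G (fun n => K * n ^ d) 1

/-- The constant containment property. -/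
def ConstantContainment {V : Type*} (G : SimpleGraph V) : Prop := PolyContainment G 0

/-- `D` is (the vertex set of) a connected component of `G \ K`. -/
def ComponentAvoiding {V : Type*} (G : SimpleGraph V) (K D : Set V) : Prop :=
  D.Nonempty ∧ D ⊆ Kᶜ ∧
  (∀ u ∈ D, ∀ v ∈ D, ∃ p : G.Walk u v, ∀ x ∈ p.support, x ∉ K) ∧
  (∀ u ∈ D, ∀ v : V, v ∉ K → (∃ p : G.Walk u v, ∀ x ∈ p.support, x ∉ K) → v ∈ D)

/-- A deep component of `G \ K`: not contained in any bounded neighborhood of `K`. -/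
def IsDeepComponent {V : Type*} (G : SimpleGraph V) (K D : Set V) : Prop :=
  ComponentAvoiding G K D ∧ ∀ r : ℕ, ¬ D ⊆ {v | ∃ k ∈ K, G.dist k v ≤ r}

/-- An unbounded component of `G \ K`. -/
def IsUnboundedComponent {V : Type*} (G : SimpleGraph V) (K D : Set V) : Prop :=
  ComponentAvoiding G K D ∧ ∀ (v : V) (r : ℕ), ¬ D ⊆ {u | G.dist v u ≤ r}

/-- Uniformly locally finite graph: vertex degrees are bounded. -/
def UnifLocFinite {V : Type*} (G : SimpleGraph V) : Prop :=
  ∃ M : ℕ, ∀ v : V, (G.neighborSet v).Finite ∧ (G.neighborSet v).ncard ≤ M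

/-- Locally finite graph. -/
def LocFinite {V : Type*} (G : SimpleGraph V) : Prop := ∀ v : V, (G.neighborSet v).Finite

/-- A `c`-quasi-isometry between two connected graphs (with their path-metrics). -/
def GraphQI {V V' : Type*} (c : ℝ) (G : SimpleGraph V) (H : SimpleGraph V') (φ : V → V') : Prop :=
  1 ≤ c ∧
  (∀ a b : V, (G.dist a b : ℝ) / c - c ≤ (H.dist (φ a) (φ b) : ℝ) ∧
    (H.dist (φ a) (φ b) : ℝ) ≤ c * (G.dist a b : ℝ) + c) ∧
  (∀ y : V', ∃ x : V, (H.dist (φ x) y : ℝ) ≤ c)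

/-- The Cayley graph of a group with respect to a set `S`. -/
def cayley (G : Type) [Group G] (S : Set G) : SimpleGraph G :=
  SimpleGraph.fromRel (fun a b => a⁻¹ * b ∈ S)

/-- `S` is a finite generating set. -/
def IsFiniteGenSet {G : Type} [Group G] (S : Set G) : Prop :=
  S.Finite ∧ Subgroup.closure S = ⊤

/-- The ball of radius `n` around the identity for the word metric w.r.t. `T`. -/
def wordBall {G : Type} [Group G] (T : Set G) (n : ℕ) : Set G :=
  {g | ∃ l : List G, (∀ x ∈ l, x ∈ T ∨ x⁻¹ ∈ T) ∧ l.length ≤ n ∧ l.prod = g}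

/-- The word metric w.r.t. `T`. -/
noncomputable def wordDist {G : Type} [Group G] (T : Set G) (x y : G) : ℕ :=
  sInf {n | x⁻¹ * y ∈ wordBall T n}

/-- `G` is an amalgamated product `A ∗_C B` with `C` a proper subgroup of both factors,
where `C` corresponds to the given subgroup. -/
def SplitsOverAmalgam (G : Type) [Group G] (C : Subgroup G) : Prop :=
  ∃ (Gi : Bool → Type) (_ : ∀ i, Group (Gi i)) (K : Type) (_ : Group K)
    (φ : ∀ i, K →* Gi i),
    (∀ i, Function.Injective (φ i)) ∧ (∀ i, ¬ Function.Surjective (φ i)) ∧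
    ∃ e : G ≃* Monoid.PushoutI φ,
      C = Subgroup.comap e.toMonoidHom (Monoid.PushoutI.base φ).range

/-- `G` is an HNN-extension over the given subgroup `C`. -/
def SplitsOverHNN (G : Type) [Group G] (C : Subgroup G) : Prop :=
  ∃ (H : Type) (_ : Group H) (A B : Subgroup H) (φ : A ≃* B)
    (e : G ≃* HNNExtension H A B φ),
    C = Subgroup.comap e.toMonoidHom
      (Subgroup.map (HNNExtension.of : H →* HNNExtension H A B φ) A)

/-- `G` splits over `C`: amalgamated product with `C` proper in both factors,
or HNN-extension over `C`. -/
def SplitsOver (G : Type) [Group G] (C : Subgroup G) : Prop :=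
  SplitsOverAmalgam G C ∨ SplitsOverHNN G C

/-- Amenability of a (discrete) group: existence of a left-invariant, finitely
additive probability measure defined on all subsets. -/
def IsAmenable (G : Type) [Group G] : Prop :=
  ∃ m : Set G → ℝ, (∀ A : Set G, 0 ≤ m A) ∧ m Set.univ = 1 ∧
    (∀ A B : Set G, Disjoint A B → m (A ∪ B) = m A + m B) ∧
    (∀ (g : G) (A : Set G), m ((g * ·) '' A) = m A)


section FirefighterHelpers

open SimpleGraph

variable {V : Type*} {G : SimpleGraph V}

lemma fireSet_succ_mono (G : SimpleGraph V) (r : ℕ) (W : ℕ → Set V) (X0 : Set V) (n : ℕ) :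
    fireSet G r W X0 n ⊆ fireSet G r W X0 (n + 1) := by
  intro v hv
  show v ∈ {v | ∃ u ∈ fireSet G r W X0 n, ∃ p : G.Walk u v, p.length ≤ r ∧
      ∀ x ∈ p.support, x ∉ protectedUpTo W (n + 1) \ fireSet G r W X0 n}
  refine ⟨v, hv, SimpleGraph.Walk.nil, by simp, ?_⟩
  intro x hx
  simp only [SimpleGraph.Walk.support_nil, List.mem_singleton] at hx
  subst hx
  exact fun hc => hc.2 hv

lemma fireSet_mono (G : SimpleGraph V) (r : ℕ) (W : ℕ → Set V) (X0 : Set V) {m n : ℕ}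
    (h : m ≤ n) : fireSet G r W X0 m ⊆ fireSet G r W X0 n := by
  induction n with
  | zero => simp_all
  | succ n ih =>
    rcases Nat.lt_or_ge m (n + 1) with h' | h'
    · exact (ih (Nat.lt_succ_iff.mp h')).trans (fireSet_succ_mono G r W X0 n)
    · have : m = n + 1 := le_antisymm h h'
      subst this; exact fun _ h => h

lemma protectedUpTo_stab (W : ℕ → Set V) (N : ℕ) (hN : ∀ n, N ≤ n → W n = ∅)
    {m : ℕ} (hm : N ≤ m) : protectedUpTo W m = protectedUpTo W N := by
  ext x
  simp only [protectedUpTo, Set.mem_iUnion, Finset.mem_Icc, exists_prop]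
  constructor
  · rintro ⟨i, ⟨h1, h2⟩, hx⟩
    rcases Nat.lt_or_ge i N with h' | h'
    · exact ⟨i, ⟨h1, h'.le⟩, hx⟩
    · rw [hN i h'] at hx; exact absurd hx (Set.notMem_empty x)
  · rintro ⟨i, ⟨h1, h2⟩, hx⟩
    exact ⟨i, ⟨h1, h2.trans hm⟩, hx⟩

lemma burned_adj {W : ℕ → Set V} {X0 : Set V} {N : ℕ} (hN : ∀ n, N ≤ n → W n = ∅)
    {u v : V} (hu : u ∈ burnedSet G 1 W X0) (hv : v ∉ protectedUpTo W N)
    (hadj : G.Adj u v) : v ∈ burnedSet G 1 W X0 := by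
  rw [burnedSet, Set.mem_iUnion] at hu
  obtain ⟨n, hun⟩ := hu
  set m := max n N with hm
  have hum : u ∈ fireSet G 1 W X0 m := fireSet_mono G 1 W X0 (le_max_left n N) hun
  rw [burnedSet, Set.mem_iUnion]
  refine ⟨m + 1, ?_⟩
  show v ∈ {v | ∃ u ∈ fireSet G 1 W X0 m, ∃ p : G.Walk u v, p.length ≤ 1 ∧
      ∀ x ∈ p.support, x ∉ protectedUpTo W (m + 1) \ fireSet G 1 W X0 m}
  refine ⟨u, hum, SimpleGraph.Walk.cons hadj SimpleGraph.Walk.nil, by simp, ?_⟩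
  intro x hx
  rw [SimpleGraph.Walk.support_cons] at hx
  rcases List.mem_cons.mp hx with rfl | hx
  · exact fun hc => hc.2 hum
  · simp only [SimpleGraph.Walk.support_nil, List.mem_singleton] at hx
    subst hx
    rw [protectedUpTo_stab W N hN (by omega : N ≤ m + 1)]
    exact fun hc => hv hc.1

lemma burned_walk {W : ℕ → Set V} {X0 : Set V} {N : ℕ} (hN : ∀ n, N ≤ n → W n = ∅)
    {u v : V} (p : G.Walk u v) :
    u ∈ burnedSet G 1 W X0 → (∀ x ∈ p.support, x ∉ protectedUpTo W N) →
    v ∈ burnedSet G 1 W X0 := by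
  induction p with
  | nil => exact fun h _ => h
  | @cons a b c h q ih =>
    intro hu hp
    have hb : b ∉ protectedUpTo W N :=
      hp b (by simp [SimpleGraph.Walk.support_cons, q.start_mem_support])
    exact ih (burned_adj hN hu hb h) (fun x hx => hp x (by simp [SimpleGraph.Walk.support_cons, hx]))

/-- The connected component of `v` in `G \ P`. -/
def compOut (G : SimpleGraph V) (P : Set V) (v : V) : Set V :=
  {w | ∃ p : G.Walk v w, ∀ x ∈ p.support, x ∉ P}

lemma compOut_not_mem {P : Set V} {v w : V} (hw : w ∈ compOut G P v) : w ∉ P := by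
  obtain ⟨p, hp⟩ := hw
  exact hp w p.end_mem_support

lemma compOut_start_not_mem {P : Set V} {v w : V} (hw : w ∈ compOut G P v) : v ∉ P := by
  obtain ⟨p, hp⟩ := hw
  exact hp v p.start_mem_support

lemma mem_compOut_self {P : Set V} {v : V} (hv : v ∉ P) : v ∈ compOut G P v :=
  ⟨SimpleGraph.Walk.nil, by simpa using hv⟩

lemma compOut_trans {P : Set V} {u v w : V} (hv : v ∈ compOut G P u) (hw : w ∈ compOut G P v) :
    w ∈ compOut G P u := by
  obtain ⟨p, hp⟩ := hv
  obtain ⟨q, hq⟩ := hw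
  refine ⟨p.append q, ?_⟩
  intro x hx
  rcases (SimpleGraph.Walk.mem_support_append_iff p q).mp hx with h | h
  · exact hp x h
  · exact hq x h

lemma compOut_symm {P : Set V} {u v : V} (hv : v ∈ compOut G P u) : u ∈ compOut G P v := by
  obtain ⟨p, hp⟩ := hv
  refine ⟨p.reverse, ?_⟩
  intro x hx
  rw [SimpleGraph.Walk.support_reverse, List.mem_reverse] at hx
  exact hp x hx

lemma compOut_eq_of_mem {P : Set V} {u v : V} (hv : v ∈ compOut G P u) :
    compOut G P v = compOut G P u := by
  ext x
  exact ⟨fun hx => compOut_trans hv hx, fun hx => compOut_trans (compOut_symm hv) hx⟩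

lemma compOut_componentAvoiding {P : Set V} {v : V} (hv : v ∉ P) :
    ComponentAvoiding G P (compOut G P v) := by
  refine ⟨⟨v, mem_compOut_self hv⟩, fun w hw => compOut_not_mem hw, ?_, ?_⟩
  · intro a ha b hb
    obtain ⟨p, hp⟩ := compOut_trans (compOut_symm ha) hb
    exact ⟨p, hp⟩
  · intro a ha b hb ⟨p, hp⟩
    exact compOut_trans ha ⟨p, hp⟩

lemma exists_boundary {P : Set V} {v p0 : V} (q : G.Walk v p0) :
    p0 ∈ P → v ∉ P → ∃ w, w ∈ compOut G P v ∧ ∃ z ∈ P, G.Adj z w := by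
  induction q with
  | nil => exact fun hp0 hv => absurd hp0 hv
  | @cons a b c h q ih =>
    intro hp0 hv
    by_cases hb : b ∈ P
    · exact ⟨a, mem_compOut_self hv, b, hb, h.symm⟩
    · obtain ⟨w, hw, z, hz, hadj⟩ := ih hp0 hb
      obtain ⟨p, hp⟩ := hw
      refine ⟨w, ⟨SimpleGraph.Walk.cons h p, ?_⟩, z, hz, hadj⟩
      intro x hx
      rcases List.mem_cons.mp (by simpa [SimpleGraph.Walk.support_cons] using hx) with rfl | hx'
      · exact hv
      · exact hp x hx'

lemma graphBall_finite (hG : G.Connected) (hlf : LocFinite G) (v : V) (r : ℕ) :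
    {u | G.dist v u ≤ r}.Finite := by
  have key : ∀ r : ℕ, {u | ∃ p : G.Walk u v, p.length ≤ r}.Finite := by
    intro r
    induction r with
    | zero =>
      apply Set.Finite.subset (Set.finite_singleton v)
      rintro u ⟨p, hp⟩
      exact SimpleGraph.Walk.eq_of_length_eq_zero (Nat.le_zero.mp hp)
    | succ r ih =>
      apply Set.Finite.subset (ih.union (Set.Finite.biUnion ih (fun w _ => hlf w)))
      rintro u ⟨p, hp⟩
      cases p with
      | nil => exact Or.inl ⟨SimpleGraph.Walk.nil, by simp⟩
      | @cons a b c h q =>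
        refine Or.inr (Set.mem_biUnion ⟨q, ?_⟩ h.symm)
        have : q.length + 1 ≤ r + 1 := by simpa using hp
        omega
  apply Set.Finite.subset (key r)
  intro u hu
  obtain ⟨p, hp⟩ := (hG.preconnected u v).exists_walk_length_eq_dist
  exact ⟨p, by rw [hp, SimpleGraph.dist_comm]; exact hu⟩

end FirefighterHelpers

theorem stmt12 {V : Type*} (G : SimpleGraph V) (hG : G.Connected) (hlf : LocFinite G)
    (d : ℕ) (h : FiniteStepPolyRetaining G d) :
    PolyContainment G d ∨
    ∃ W : Set V, W.Finite ∧ ∃ D₁ D₂ : Set V,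
      IsUnboundedComponent G W D₁ ∧ IsUnboundedComponent G W D₂ ∧ D₁ ≠ D₂ := by
  classical
  by_cases hPC : PolyContainment G d
  · exact Or.inl hPC
  right
  obtain ⟨K, hK, hret⟩ := h
  have hnc : ¬ ContainmentProperty G (fun n => K * n ^ d) 1 := fun hc => hPC ⟨K, hK, hc⟩
  rw [ContainmentProperty] at hnc
  push_neg at hnc
  obtain ⟨X0, hX0fin, hX0⟩ := hnc
  obtain ⟨W, ⟨hWb, hWgrow⟩, N, hN⟩ := hret X0 hX0fin
  set B := burnedSet G 1 W X0 with hB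
  have hBinf : B.Infinite := hX0 W hWb
  obtain ⟨u₀, hu₀, ⟨C, hC, hle⟩, -⟩ := hWgrow
  -- the unburned set is infinite
  have hUinf : Bᶜ.Infinite := by
    by_contra hf
    rw [Set.not_infinite] at hf
    have hub : ∀ n, graphGrowth G Bᶜ {u₀} n ≤ Bᶜ.ncard := by
      intro n
      apply Set.ncard_le_ncard _ hf
      intro x hx; exact hx.1
    set M := C * Bᶜ.ncard + C with hM
    have hVinf : (Set.univ : Set V).Infinite := hBinf.mono (Set.subset_univ _)
    obtain ⟨T, hTsub, hTfin, hTcard⟩ := hVinf.exists_subset_ncard_eq (M + 1)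
    set n := hTfin.toFinset.sup (fun t => G.dist u₀ t) with hn
    have hTball : T ⊆ {v | v ∈ Set.univ ∧ ∃ a ∈ ({u₀} : Set V), G.dist a v ≤ n} := by
      intro t ht
      exact ⟨trivial, u₀, rfl, Finset.le_sup (f := fun t => G.dist u₀ t)
        (hTfin.mem_toFinset.mpr ht)⟩
    have hballfin : {v | v ∈ Set.univ ∧ ∃ a ∈ ({u₀} : Set V), G.dist a v ≤ n}.Finite := by
      apply (graphBall_finite hG hlf u₀ n).subset
      rintro v ⟨-, a, rfl, hd⟩
      exact hd
    have h1 : M + 1 ≤ graphGrowth G Set.univ {u₀} n := by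
      rw [← hTcard]
      exact Set.ncard_le_ncard hTball hballfin
    have h2 := hle n
    have h3 := hub (C * n + C)
    have h4 : C * graphGrowth G Bᶜ {u₀} (C * n + C) + C ≤ M := by
      rw [hM]
      exact Nat.add_le_add_right (Nat.mul_le_mul_left C h3) C
    omega
  -- the protected set
  set P := protectedUpTo W N with hP
  have hPfin : P.Finite := by
    have hPeq : P = ⋃ i ∈ Set.Icc 1 N, W i := by
      ext x
      simp [hP, protectedUpTo, Set.mem_iUnion]
    rw [hPeq]
    exact Set.Finite.biUnion (Set.finite_Icc 1 N) (fun i hi => (hWb i hi.1).1)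
  by_cases hPne : P.Nonempty
  swap
  · exfalso
    obtain ⟨b, hb⟩ := hBinf.nonempty
    obtain ⟨u, hu⟩ := hUinf.nonempty
    have hPe : P = ∅ := Set.not_nonempty_iff_eq_empty.mp hPne
    obtain ⟨p⟩ := hG.preconnected b u
    exact hu (burned_walk hN p hb (fun x _ => by rw [← hP, hPe]; exact Set.notMem_empty x))
  obtain ⟨p0, hp0⟩ := hPne
  -- the boundary set
  set S := ⋃ z ∈ P, G.neighborSet z with hS
  have hSfin : S.Finite := Set.Finite.biUnion hPfin (fun z _ => hlf z)
  have cover : ∀ v : V, v ∉ P → ∃ w ∈ S, w ∉ P ∧ compOut G P w = compOut G P v := by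
    intro v hv
    obtain ⟨q⟩ := hG.preconnected v p0
    obtain ⟨w, hw, z, hz, hadj⟩ := exists_boundary q hp0 hv
    exact ⟨w, Set.mem_biUnion hz hadj, compOut_not_mem hw, compOut_eq_of_mem hw⟩
  have pigeon : ∀ A : Set V, A.Infinite → A ⊆ Pᶜ →
      ∃ w, w ∉ P ∧ (compOut G P w ∩ A).Infinite := by
    intro A hAinf hAP
    by_contra hcon
    push_neg at hcon
    apply hAinf
    have hsub : A ⊆ ⋃ w ∈ S, (compOut G P w ∩ A) := by
      intro v hv
      obtain ⟨w, hwS, hwP, hco⟩ := cover v (hAP hv)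
      exact Set.mem_biUnion hwS ⟨hco ▸ mem_compOut_self (hAP hv), hv⟩
    refine (Set.Finite.biUnion hSfin (fun w _ => ?_)).subset hsub
    by_cases hw : w ∈ P
    · refine Set.Finite.subset (Set.finite_empty) ?_
      rintro x ⟨hx, -⟩
      exact absurd hw (compOut_start_not_mem hx)
    · exact hcon w hw
  obtain ⟨w₁, hw₁P, h1inf⟩ := pigeon (B \ P) (hBinf.diff hPfin) (fun x hx => hx.2)
  obtain ⟨w₂, hw₂P, h2inf⟩ := pigeon (Bᶜ \ P) (hUinf.diff hPfin) (fun x hx => hx.2)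
  obtain ⟨b₁, hb₁⟩ := h1inf.nonempty
  obtain ⟨b₂, hb₂⟩ := h2inf.nonempty
  have hD₁inf : (compOut G P w₁).Infinite := h1inf.mono Set.inter_subset_left
  have hD₂inf : (compOut G P w₂).Infinite := h2inf.mono Set.inter_subset_left
  have hD₁B : compOut G P w₁ ⊆ B := by
    intro x hx
    obtain ⟨p, hp⟩ := compOut_trans (compOut_symm hb₁.1) hx
    exact burned_walk hN p hb₁.2.1 (fun y hy => by rw [← hP]; exact hp y hy)
  have hD₂B : compOut G P w₂ ⊆ Bᶜ := by
    intro x hx hxB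
    obtain ⟨p, hp⟩ := compOut_trans (compOut_symm hx) hb₂.1
    exact hb₂.2.1 (burned_walk hN p hxB (fun y hy => by rw [← hP]; exact hp y hy))
  refine ⟨P, hPfin, compOut G P w₁, compOut G P w₂, ?_, ?_, ?_⟩
  · refine ⟨compOut_componentAvoiding hw₁P, fun v r hsub => ?_⟩
    exact hD₁inf ((graphBall_finite hG hlf v r).subset hsub)
  · refine ⟨compOut_componentAvoiding hw₂P, fun v r hsub => ?_⟩
    exact hD₂inf ((graphBall_finite hG hlf v r).subset hsub)
  · intro heq
    exact hD₂B (heq ▸ hb₁.1) (hD₁B hb₁.1)
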